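/- arXiv:1702.00274 — 4 statements merged into one kernel-verified Lean document; each statement's English description precedes it below -/
import Mathlib

section
/- Let S be a left reversible semitopological semigroup, i.e., a semigroup with a Hausdorff topology in which for each a ∈ S the maps s ↦ sa and s ↦ as are continuous, and in which any two closed right ideals have nonempty intersection. Define a relation on S by α ≥ β if and only if αS ⊆ cl(βS), where cl denotes topological closure. Then this relation is reflexive-up-to-the-ideal-order and transitive, and any two elements of S have a common upper bound; in particular (S, ≥) is a directed set. -/
/-- The (closed under right multiplication) right ideal `aS` generated by `a`
in a semigroup `S`. -/
def rightIdeal {S : Type*} [Mul S] (a : S) : Set S := Set.range (fun s => a * s)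

lemma closure_rightIdeal_mul {S : Type*} [Semigroup S] [TopologicalSpace S]
    (hcont : ∀ a : S, Continuous (fun s : S => s * a) ∧ Continuous (fun s : S => a * s))
    (a : S) : ∀ x ∈ closure (rightIdeal a), ∀ s : S, x * s ∈ closure (rightIdeal a) := by
  intro x hx s
  refine map_mem_closure (f := fun y => y * s) (hcont s).1 hx ?_
  rintro y ⟨t, rfl⟩
  exact ⟨t * s, (mul_assoc a t s).symm⟩

/-- Let `S` be a left reversible semitopological semigroup: a semigroup with a
Hausdorff topology in which multiplication is separately continuous, and in which
any two nonempty closed right ideals intersect.  Define `α ≥ β` iff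
`αS ⊆ cl (βS)`.  Then this relation is reflexive, transitive, and any two
elements have a common upper bound; in particular `(S, ≥)` is a directed set. -/
theorem directed_of_leftReversible
    {S : Type*} [Semigroup S] [TopologicalSpace S] [T2Space S]
    (hcont : ∀ a : S, Continuous (fun s : S => s * a) ∧ Continuous (fun s : S => a * s))
    (hrev : ∀ I J : Set S, IsClosed I → IsClosed J → I.Nonempty → J.Nonempty →
      (∀ x ∈ I, ∀ s : S, x * s ∈ I) → (∀ x ∈ J, ∀ s : S, x * s ∈ J) →
      (I ∩ J).Nonempty) :
    -- reflexivity: `α ≥ α`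
    (∀ a : S, rightIdeal a ⊆ closure (rightIdeal a)) ∧
    -- transitivity: `b ≥ a` and `c ≥ b` imply `c ≥ a`
    (∀ a b c : S, rightIdeal b ⊆ closure (rightIdeal a) →
      rightIdeal c ⊆ closure (rightIdeal b) →
      rightIdeal c ⊆ closure (rightIdeal a)) ∧
    -- directedness: any two elements have a common upper bound
    (∀ a b : S, ∃ c : S, rightIdeal c ⊆ closure (rightIdeal a) ∧
      rightIdeal c ⊆ closure (rightIdeal b)) := by
  refine ⟨fun a => subset_closure, ?_, ?_⟩
  · intro a b c hba hcb
    exact hcb.trans (closure_minimal hba isClosed_closure)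
  · intro a b
    obtain ⟨c, hca, hcb⟩ := hrev (closure (rightIdeal a)) (closure (rightIdeal b))
      isClosed_closure isClosed_closure
      ⟨a * a, subset_closure ⟨a, rfl⟩⟩ ⟨b * b, subset_closure ⟨b, rfl⟩⟩
      (closure_rightIdeal_mul hcont a) (closure_rightIdeal_mul hcont b)
    refine ⟨c, ?_, ?_⟩ <;> rintro y ⟨t, rfl⟩
    · exact closure_rightIdeal_mul hcont a c hca t
    · exact closure_rightIdeal_mul hcont b c hcb t
end

section
/- Let K be a weakly compact, convex, non-empty subset of a nearly uniformly convex Banach space E, and let S be a left reversible semitopological semigroup acting non-expansively and separately continuously on K. Then S has a common fixed point in K, i.e., there exists u ∈ K with s(u) = u for all s ∈ S. -/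
set_option maxHeartbeats 1000000

open Filter

section Helpers

section Ideals
variable {S : Type*} [Semigroup S] [TopologicalSpace S]

/-- The closed right ideal generated by `w`. -/
def idealSet (w : S) : Set S := closure (insert w (Set.range fun u => w * u))

lemma idealSet_isClosed (w : S) : IsClosed (idealSet w) := isClosed_closure

lemma mem_idealSet_self (w : S) : w ∈ idealSet w :=
  subset_closure (Set.mem_insert _ _)

lemma mul_mem_idealSet (w u : S) : w * u ∈ idealSet w :=
  subset_closure (Set.mem_insert_of_mem _ ⟨u, rfl⟩)

lemma idealSet_nonempty (w : S) : (idealSet w).Nonempty := ⟨w, mem_idealSet_self w⟩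

lemma idealSet_mul_mem
    (hcont : ∀ a : S, Continuous (fun s : S => s * a) ∧ Continuous (fun s : S => a * s))
    {w x : S} (hx : x ∈ idealSet w) (u : S) : x * u ∈ idealSet w := by
  have h1 : (fun s : S => s * u) '' closure (insert w (Set.range fun v => w * v)) ⊆
      closure ((fun s : S => s * u) '' insert w (Set.range fun v => w * v)) :=
    image_closure_subset_closure_image (hcont u).1
  have h2 : (fun s : S => s * u) '' insert w (Set.range fun v => w * v) ⊆
      insert w (Set.range fun v => w * v) := by
    rintro - ⟨y, hy, rfl⟩
    rcases hy with rfl | ⟨v, rfl⟩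
    · exact Set.mem_insert_of_mem _ ⟨u, rfl⟩
    · exact Set.mem_insert_of_mem _ ⟨v * u, (mul_assoc _ _ _).symm⟩
  have hmem := h1 ⟨x, hx, rfl⟩
  exact closure_minimal (h2.trans subset_closure) (idealSet_isClosed w) hmem

lemma idealSet_subset
    (hcont : ∀ a : S, Continuous (fun s : S => s * a) ∧ Continuous (fun s : S => a * s))
    {w a : S} (ha : a ∈ idealSet w) : idealSet a ⊆ idealSet w := by
  apply closure_minimal _ (idealSet_isClosed w)
  rintro x (rfl | ⟨u, rfl⟩)
  · exact ha
  · exact idealSet_mul_mem hcont ha u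

lemma idealSet_directed
    (hcont : ∀ a : S, Continuous (fun s : S => s * a) ∧ Continuous (fun s : S => a * s))
    (hrev : ∀ I J : Set S, IsClosed I → IsClosed J → I.Nonempty → J.Nonempty →
      (∀ x ∈ I, ∀ s : S, x * s ∈ I) → (∀ x ∈ J, ∀ s : S, x * s ∈ J) →
      (I ∩ J).Nonempty)
    (w₁ w₂ : S) : ∃ a, idealSet a ⊆ idealSet w₁ ∧ idealSet a ⊆ idealSet w₂ := by
  obtain ⟨a, ha₁, ha₂⟩ := hrev (idealSet w₁) (idealSet w₂) (idealSet_isClosed _)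
    (idealSet_isClosed _) (idealSet_nonempty _) (idealSet_nonempty _)
    (fun x hx s => idealSet_mul_mem hcont hx s) (fun x hx s => idealSet_mul_mem hcont hx s)
  exact ⟨a, idealSet_subset hcont ha₁, idealSet_subset hcont ha₂⟩

lemma idealSet_directed_list [Nonempty S]
    (hcont : ∀ a : S, Continuous (fun s : S => s * a) ∧ Continuous (fun s : S => a * s))
    (hrev : ∀ I J : Set S, IsClosed I → IsClosed J → I.Nonempty → J.Nonempty →
      (∀ x ∈ I, ∀ s : S, x * s ∈ I) → (∀ x ∈ J, ∀ s : S, x * s ∈ J) →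
      (I ∩ J).Nonempty)
    (l : List S) : ∃ a, ∀ w ∈ l, idealSet a ⊆ idealSet w := by
  induction l with
  | nil => exact ⟨Classical.arbitrary S, by simp⟩
  | cons w l ih =>
    obtain ⟨b, hb⟩ := ih
    obtain ⟨a, ha₁, ha₂⟩ := idealSet_directed hcont hrev w b
    refine ⟨a, fun w' hw' => ?_⟩
    rcases List.mem_cons.mp hw' with rfl | hw'
    · exact ha₁
    · exact ha₂.trans (hb w' hw')

end Ideals

section Weak
variable {E : Type*} [NormedAddCommGroup E] [NormedSpace ℝ E]

lemma weakSpace_t2 : T2Space (WeakSpace ℝ E) := by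
  have hinj : Function.Injective ((topDualPairing ℝ E).flip) := by
    intro x y hxy
    rw [NormedSpace.eq_iff_forall_dual_eq ℝ]
    intro g
    have := congrArg (fun φ => φ g) hxy
    simpa using this
  exact (WeakBilin.isEmbedding hinj).t2Space

lemma weakSpace_eval_continuous (f : StrongDual ℝ E) :
    Continuous fun φ : WeakSpace ℝ E => f ((toWeakSpace ℝ E).symm φ) := by
  exact WeakBilin.eval_continuous ((topDualPairing ℝ E).flip) f

lemma isClosed_weak_image_of_convex {A : Set E} (hA : Convex ℝ A) (hcl : IsClosed A) :
    IsClosed (toWeakSpace ℝ E '' A) := by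
  have := hA.toWeakSpace_closure (𝕜 := ℝ)
  rw [hcl.closure_eq] at this
  rw [this]
  exact isClosed_closure

lemma norm_bound_of_weak_compact [CompleteSpace E] {A : Set E}
    (h : IsCompact (toWeakSpace ℝ E '' A)) : ∃ R : ℝ, ∀ x ∈ A, ‖x‖ ≤ R := by
  have hpb : ∀ f : StrongDual ℝ E, ∃ C, ∀ a : A,
      ‖NormedSpace.inclusionInDoubleDual ℝ E (a : E) f‖ ≤ C := by
    intro f
    have hc : IsCompact ((fun φ : WeakSpace ℝ E => f ((toWeakSpace ℝ E).symm φ)) ''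
        (toWeakSpace ℝ E '' A)) := h.image (weakSpace_eval_continuous f)
    obtain ⟨C, hC⟩ := hc.isBounded.subset_closedBall 0
    refine ⟨C, fun a => ?_⟩
    have : f ((toWeakSpace ℝ E).symm (toWeakSpace ℝ E (a : E))) ∈ Metric.closedBall (0:ℝ) C :=
      hC ⟨toWeakSpace ℝ E (a : E), ⟨(a : E), a.2, rfl⟩, rfl⟩
    simp only [LinearEquiv.symm_apply_apply] at this
    simpa [NormedSpace.dual_def, Real.norm_eq_abs, abs_sub_comm] using
      mem_closedBall_zero_iff.mp this
  obtain ⟨C', hC'⟩ := banach_steinhaus (g := fun a : A => NormedSpace.inclusionInDoubleDual ℝ E a)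
    (fun f => hpb f)
  refine ⟨max C' 0, fun x hx => ?_⟩
  refine NormedSpace.norm_le_dual_bound ℝ x (le_max_right _ _) (fun f => ?_)
  calc ‖f x‖ = ‖NormedSpace.inclusionInDoubleDual ℝ E x f‖ := rfl
    _ ≤ ‖NormedSpace.inclusionInDoubleDual ℝ E x‖ * ‖f‖ :=
        ContinuousLinearMap.le_opNorm _ _
    _ ≤ max C' 0 * ‖f‖ := by
        gcongr
        exact le_trans (hC' ⟨x, hx⟩) (le_max_left _ _)

end Weak

lemma real_le_of_forall_pos_le_add {a b : ℝ} (h : ∀ ε : ℝ, 0 < ε → a ≤ b + ε) : a ≤ b := by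
  by_contra h'
  push_neg at h'
  linarith [h ((a - b)/2) (by linarith)]

end Helpers

/-- A Banach space `E` is nearly uniformly convex (NUC) if for each `ε > 0` there is
`δ > 0` such that every sequence `(x n)` in the closed unit ball with separation
`sep (x n) = inf {‖x n - x m‖ : n ≠ m} > ε` satisfies
`dist (0, co {x n}) < 1 - δ`. -/
def NearlyUniformlyConvex (E : Type*) [NormedAddCommGroup E] [NormedSpace ℝ E] : Prop :=
  ∀ ε : ℝ, 0 < ε → ∃ δ : ℝ, 0 < δ ∧ ∀ x : ℕ → E,
    (∀ n, x n ∈ Metric.closedBall (0 : E) 1) →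
    ε < sInf {d : ℝ | ∃ n m : ℕ, n ≠ m ∧ d = ‖x n - x m‖} →
    Metric.infDist (0 : E) (convexHull ℝ (Set.range x)) < 1 - δ

/-- **Corollary.** Let `K` be a weakly compact convex non-empty subset of a nearly
uniformly convex Banach space `E`, and let `S` be a left reversible semitopological
semigroup acting non-expansively and separately continuously on `K`.  Then `S` has
a common fixed point in `K`. -/
theorem common_fixed_point_of_nearlyUniformlyConvex
    {E : Type*} [NormedAddCommGroup E] [NormedSpace ℝ E] [CompleteSpace E]
    (hNUC : NearlyUniformlyConvex E)
    {K : Set E} (hKw : IsCompact (toWeakSpace ℝ E '' K))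
    (hKconv : Convex ℝ K) (hKne : K.Nonempty)
    {S : Type*} [Semigroup S] [TopologicalSpace S] [T2Space S]
    (hcont : ∀ a : S, Continuous (fun s : S => s * a) ∧ Continuous (fun s : S => a * s))
    (hrev : ∀ I J : Set S, IsClosed I → IsClosed J → I.Nonempty → J.Nonempty →
      (∀ x ∈ I, ∀ s : S, x * s ∈ I) → (∀ x ∈ J, ∀ s : S, x * s ∈ J) →
      (I ∩ J).Nonempty)
    (act : S → E → E)
    (hmaps : ∀ s : S, ∀ x ∈ K, act s x ∈ K)
    (haction : ∀ s t : S, ∀ x ∈ K, act (s * t) x = act s (act t x))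
    (hsepcont₁ : ∀ x ∈ K, Continuous (fun s : S => act s x))
    (hsepcont₂ : ∀ s : S, ContinuousOn (act s) K)
    (hnonexp : ∀ s : S, ∀ x ∈ K, ∀ y ∈ K, ‖act s x - act s y‖ ≤ ‖x - y‖) :
    ∃ u ∈ K, ∀ s : S, act s u = u := by
  classical
  by_cases hSne : Nonempty S
  swap
  · obtain ⟨u, hu⟩ := hKne
    exact ⟨u, hu, fun s => absurd ⟨s⟩ hSne⟩
  haveI := hSne
  haveI : T2Space (WeakSpace ℝ E) := weakSpace_t2
  obtain ⟨R₀, hR₀⟩ := norm_bound_of_weak_compact hKw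
  -- K is norm-closed
  have hclosed_of_wcomp : ∀ A : Set E, IsCompact (toWeakSpace ℝ E '' A) → IsClosed A := by
    intro A hA
    have h1 : A = toWeakSpaceCLM ℝ E ⁻¹' (toWeakSpace ℝ E '' A) := by
      ext x
      constructor
      · intro hx; exact ⟨x, hx, rfl⟩
      · rintro ⟨y, hy, hxy⟩
        have : y = x := (toWeakSpace ℝ E).injective hxy
        rwa [← this]
    rw [h1]
    exact hA.isClosed.preimage (toWeakSpaceCLM ℝ E).continuous
  -- the family for Zorn's lemma
  set 𝒞 : Set (Set E) := {A | A.Nonempty ∧ A ⊆ K ∧ Convex ℝ A ∧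
      IsCompact (toWeakSpace ℝ E '' A) ∧ ∀ s : S, ∀ x ∈ A, act s x ∈ A} with h𝒞
  have hK𝒞 : K ∈ 𝒞 := ⟨hKne, Set.Subset.rfl, hKconv, hKw, fun s x hx => hmaps s x hx⟩
  obtain ⟨M, -, hMmem, hMmin'⟩ : ∃ M, M ⊆ K ∧ Minimal (· ∈ 𝒞) M := by
    apply zorn_superset_nonempty 𝒞 ?_ K hK𝒞
    intro c hc𝒞 hchain hcne
    haveI : Nonempty c := hcne.to_subtype
    have hcomp : ∀ A : c, IsCompact (toWeakSpace ℝ E '' (A : Set E)) := fun A => (hc𝒞 A.2).2.2.2.1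
    have hne : ∀ A : c, (toWeakSpace ℝ E '' (A : Set E)).Nonempty := fun A =>
      ((hc𝒞 A.2).1).image _
    have hcl : ∀ A : c, IsClosed (toWeakSpace ℝ E '' (A : Set E)) := fun A =>
      isClosed_weak_image_of_convex (hc𝒞 A.2).2.2.1 (hclosed_of_wcomp _ (hcomp A))
    have hdir : Directed (fun A B : Set (WeakSpace ℝ E) => A ⊇ B)
        (fun A : c => toWeakSpace ℝ E '' (A : Set E)) := by
      intro A B
      rcases hchain.total A.2 B.2 with h | h
      · exact ⟨A, Set.Subset.rfl, Set.image_mono h⟩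
      · exact ⟨B, Set.image_mono h, Set.Subset.rfl⟩
    obtain ⟨φ, hφ⟩ := IsCompact.nonempty_iInter_of_directed_nonempty_isCompact_isClosed
      _ hdir hne hcomp hcl
    set x := (toWeakSpace ℝ E).symm φ with hx
    have hxmem : ∀ A ∈ c, x ∈ A := by
      intro A hA
      have := Set.mem_iInter.mp hφ ⟨A, hA⟩
      obtain ⟨y, hy, hyφ⟩ := this
      have : y = x := by rw [hx, ← hyφ, LinearEquiv.symm_apply_apply]
      rwa [← this]
    obtain ⟨A₀, hA₀⟩ := hcne
    refine ⟨⋂₀ c, ⟨⟨x, fun A hA => hxmem A hA⟩, ?_, ?_, ?_, ?_⟩,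
      fun A hA => Set.sInter_subset_of_mem hA⟩
    · exact (Set.sInter_subset_of_mem hA₀).trans (hc𝒞 hA₀).2.1
    · exact convex_sInter (fun A hA => (hc𝒞 hA).2.2.1)
    · refine IsCompact.of_isClosed_subset (hcomp ⟨A₀, hA₀⟩) ?_ ?_
      · refine isClosed_weak_image_of_convex (convex_sInter (fun A hA => (hc𝒞 hA).2.2.1)) ?_
        exact isClosed_sInter (fun A hA => hclosed_of_wcomp _ (hc𝒞 hA).2.2.2.1)
      · exact Set.image_mono (Set.sInter_subset_of_mem hA₀)
    · intro s y hy
      exact fun A hA => (hc𝒞 hA).2.2.2.2 s y (hy A hA)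
  obtain ⟨hMne, hMK, hMconv, hMcomp, hMinv⟩ := hMmem
  have hMmin : ∀ A ∈ 𝒞, A ⊆ M → A = M := by
    intro A hA hAM
    exact Set.Subset.antisymm hAM (hMmin' hA hAM)
  have hMcl : IsClosed M := hclosed_of_wcomp M hMcomp
  obtain ⟨x₀, hx₀M⟩ := id hMne
  have hx₀K : x₀ ∈ K := hMK hx₀M
  set Φ : S → E := fun s => act s x₀ with hΦdef
  have hΦM : ∀ s, Φ s ∈ M := fun s => hMinv s x₀ hx₀M
  have hΦK : ∀ s, Φ s ∈ K := fun s => hMK (hΦM s)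
  -- the asymptotic radius function
  set B : E → Set ℝ := fun y => {b | ∃ w : S, ∀ s ∈ idealSet w, ‖Φ s - y‖ ≤ b} with hBdef
  set rr : E → ℝ := fun y => sInf (B y) with hrrdef
  have hBne : ∀ y, (B y).Nonempty := by
    intro y
    refine ⟨R₀ + ‖y‖, Classical.arbitrary S, fun s _ => ?_⟩
    calc ‖Φ s - y‖ ≤ ‖Φ s‖ + ‖y‖ := norm_sub_le _ _
      _ ≤ R₀ + ‖y‖ := by gcongr; exact hR₀ _ (hΦK s)
  have hBlb : ∀ y, ∀ b ∈ B y, (0:ℝ) ≤ b := by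
    rintro y b ⟨w, hw⟩
    exact le_trans (norm_nonneg _) (hw w (mem_idealSet_self w))
  have hBbdd : ∀ y, BddBelow (B y) := fun y => ⟨0, fun b hb => hBlb y b hb⟩
  have hr_le : ∀ y b, b ∈ B y → rr y ≤ b := fun y b hb => csInf_le (hBbdd y) hb
  have hr_nonneg : ∀ y, 0 ≤ rr y := fun y => le_csInf (hBne y) (hBlb y)
  have hr_ev : ∀ y c, rr y < c → ∃ w : S, ∀ s ∈ idealSet w, ‖Φ s - y‖ ≤ c := by
    intro y c hc
    obtain ⟨b, hb, hbc⟩ := exists_lt_of_csInf_lt (hBne y) hc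
    obtain ⟨w, hw⟩ := hb
    exact ⟨w, fun s hs => (hw s hs).trans hbc.le⟩
  have hr_freq : ∀ y c, c < rr y → ∀ w : S, ∃ s ∈ idealSet w, c < ‖Φ s - y‖ := by
    intro y c hc w
    by_contra h
    push_neg at h
    exact absurd (hr_le y c ⟨w, h⟩) (not_le.mpr hc)
  have hr_ev_fin : ∀ (n : ℕ) (ys : Fin n → E) (cs : Fin n → ℝ), (∀ i, rr (ys i) < cs i) →
      ∃ w : S, ∀ s ∈ idealSet w, ∀ i, ‖Φ s - ys i‖ ≤ cs i := by
    intro n ys cs h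
    choose w hw using fun i => hr_ev (ys i) (cs i) (h i)
    obtain ⟨a, ha⟩ := idealSet_directed_list hcont hrev (List.ofFn w)
    exact ⟨a, fun s hs i => hw i s (ha (w i) (List.mem_ofFn.mpr ⟨i, rfl⟩) hs)⟩
  -- key invariance lemma
  have hr_key : ∀ t : S, ∀ y ∈ K, rr (act t y) ≤ rr y := by
    intro t y hyK
    by_contra hlt
    push_neg at hlt
    set c := (rr y + rr (act t y)) / 2 with hcdef
    have hc1 : rr y < c := by rw [hcdef]; linarith
    have hc2 : c < rr (act t y) := by rw [hcdef]; linarith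
    obtain ⟨w, hw⟩ := hr_ev y c hc1
    have hGcl : IsClosed {σ : S | ‖Φ σ - act t y‖ ≤ c} := by
      have hcont' : Continuous fun σ : S => ‖Φ σ - act t y‖ :=
        ((hsepcont₁ x₀ hx₀K).sub continuous_const).norm
      exact isClosed_le hcont' continuous_const
    have hG : idealSet (t * w) ⊆ {σ : S | ‖Φ σ - act t y‖ ≤ c} := by
      apply closure_minimal _ hGcl
      rintro σ (rfl | ⟨u, rfl⟩)
      · have he : Φ (t * w) = act t (act w x₀) := haction t w x₀ hx₀K
        show ‖Φ (t * w) - act t y‖ ≤ c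
        rw [he]
        calc ‖act t (act w x₀) - act t y‖ ≤ ‖act w x₀ - y‖ :=
              hnonexp t (act w x₀) (hΦK w) y hyK
          _ ≤ c := hw w (mem_idealSet_self w)
      · have hassoc : t * w * u = t * (w * u) := mul_assoc t w u
        have he : Φ (t * (w * u)) = act t (act (w * u) x₀) := haction t (w * u) x₀ hx₀K
        show ‖Φ (t * w * u) - act t y‖ ≤ c
        rw [hassoc, he]
        calc ‖act t (act (w * u) x₀) - act t y‖ ≤ ‖act (w * u) x₀ - y‖ :=
              hnonexp t (act (w * u) x₀) (hΦK (w * u)) y hyK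
          _ ≤ c := hw (w * u) (mul_mem_idealSet w u)
    exact absurd (hr_le (act t y) c ⟨t * w, fun σ hσ => hG hσ⟩) (not_le.mpr hc2)
  -- Lipschitz continuity of rr
  have hr_lip : ∀ y z : E, rr y ≤ rr z + ‖y - z‖ := by
    intro y z
    refine real_le_of_forall_pos_le_add (fun ε hε => ?_)
    obtain ⟨w, hw⟩ := hr_ev z (rr z + ε) (by linarith)
    have h1 : rr y ≤ rr z + ε + ‖y - z‖ := by
      refine hr_le y _ ⟨w, fun s hs => ?_⟩
      calc ‖Φ s - y‖ ≤ ‖Φ s - z‖ + ‖z - y‖ := by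
            have := norm_sub_le_norm_sub_add_norm_sub (Φ s) z y
            linarith [this]
        _ ≤ rr z + ε + ‖y - z‖ := by
            rw [norm_sub_rev z y]; gcongr; exact hw s hs
    linarith
  have hr_cont : Continuous rr := by
    have hlw : LipschitzWith 1 rr := by
      refine LipschitzWith.of_dist_le_mul (fun y z => ?_)
      rw [Real.dist_eq, dist_eq_norm, NNReal.coe_one, one_mul, abs_sub_le_iff]
      constructor
      · linarith [hr_lip y z]
      · linarith [hr_lip z y, norm_sub_rev y z]
    exact hlw.continuous
  -- convexity inequality for rr
  have hr_conv : ∀ (a b : ℝ) (y z : E), 0 ≤ a → 0 ≤ b → a + b = 1 →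
      rr (a • y + b • z) ≤ a * rr y + b * rr z := by
    intro a b y z ha hb hab
    refine real_le_of_forall_pos_le_add (fun ε hε => ?_)
    obtain ⟨w, hw⟩ := hr_ev_fin 2 ![y, z] ![rr y + ε, rr z + ε] (by
      intro i
      fin_cases i <;> simp <;> linarith)
    have h1 : rr (a • y + b • z) ≤ a * (rr y + ε) + b * (rr z + ε) := by
      refine hr_le _ _ ⟨w, fun s hs => ?_⟩
      have hy' : ‖Φ s - y‖ ≤ rr y + ε := by simpa using hw s hs 0
      have hz' : ‖Φ s - z‖ ≤ rr z + ε := by simpa using hw s hs 1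
      have hsplit : Φ s - (a • y + b • z) = a • (Φ s - y) + b • (Φ s - z) := by
        calc Φ s - (a • y + b • z) = (a + b) • Φ s - (a • y + b • z) := by
              rw [hab, one_smul]
          _ = a • (Φ s - y) + b • (Φ s - z) := by
              rw [add_smul, smul_sub, smul_sub]; abel
      rw [hsplit]
      calc ‖a • (Φ s - y) + b • (Φ s - z)‖ ≤ ‖a • (Φ s - y)‖ + ‖b • (Φ s - z)‖ :=
            norm_add_le _ _
        _ = a * ‖Φ s - y‖ + b * ‖Φ s - z‖ := by
            rw [norm_smul, norm_smul, Real.norm_eq_abs, Real.norm_eq_abs,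
              abs_of_nonneg ha, abs_of_nonneg hb]
        _ ≤ a * (rr y + ε) + b * (rr z + ε) := by gcongr
    have h2 : a * (rr y + ε) + b * (rr z + ε) = a * rr y + b * rr z + ε := by
      linear_combination ε * hab
    linarith
  -- the minimal value of rr on M
  set r₀ : ℝ := sInf (rr '' M) with hr₀def
  have hr₀bdd : BddBelow (rr '' M) := ⟨0, by rintro - ⟨y, -, rfl⟩; exact hr_nonneg y⟩
  have hr₀le : ∀ y ∈ M, r₀ ≤ rr y := fun y hy => csInf_le hr₀bdd ⟨y, hy, rfl⟩
  have hr₀nonneg : 0 ≤ r₀ := le_csInf (hMne.image rr) (by rintro - ⟨y, -, rfl⟩; exact hr_nonneg y)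
  -- the set of minimizers is everything, by minimality
  have hrconst : ∀ y ∈ M, rr y = r₀ := by
    have hlevel : ∀ c : ℝ, r₀ < c → ∃ y ∈ M, rr y < c := by
      intro c hc
      obtain ⟨-, ⟨y, hy, rfl⟩, h⟩ := exists_lt_of_csInf_lt (hMne.image rr) hc
      exact ⟨y, hy, h⟩
    set D : ℕ → Set E := fun n => {y ∈ M | rr y ≤ r₀ + 1/(n+1)} with hDdef
    have hDconv : ∀ n, Convex ℝ (D n) := by
      intro n
      intro y hy z hz a b ha hb hab
      refine ⟨hMconv hy.1 hz.1 ha hb hab, ?_⟩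
      calc rr (a • y + b • z) ≤ a * rr y + b * rr z := hr_conv a b y z ha hb hab
        _ ≤ a * (r₀ + 1/(n+1)) + b * (r₀ + 1/(n+1)) := by gcongr; exacts [hy.2, hz.2]
        _ = r₀ + 1/(n+1) := by linear_combination (r₀ + 1/((n:ℝ)+1)) * hab
    have hDcl : ∀ n, IsClosed (D n) := by
      intro n
      exact hMcl.inter (isClosed_le hr_cont continuous_const)
    have hDne : ∀ n, (toWeakSpace ℝ E '' D n).Nonempty := by
      intro n
      obtain ⟨y, hy, hlt⟩ := hlevel (r₀ + 1/(n+1)) (by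
        have : (0:ℝ) < 1/((n:ℝ)+1) := by positivity
        linarith)
      exact ⟨toWeakSpace ℝ E y, y, ⟨hy, hlt.le⟩, rfl⟩
    have hDcomp : ∀ n, IsCompact (toWeakSpace ℝ E '' D n) := by
      intro n
      refine IsCompact.of_isClosed_subset hMcomp
        (isClosed_weak_image_of_convex (hDconv n) (hDcl n)) ?_
      exact Set.image_mono (fun y hy => hy.1)
    have hDdir : Directed (fun A B : Set (WeakSpace ℝ E) => A ⊇ B)
        (fun n => toWeakSpace ℝ E '' D n) := by
      intro m n
      have hmax : ∀ k l : ℕ, k ≤ l → r₀ + (1:ℝ)/(l+1) ≤ r₀ + 1/(k+1) := by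
        intro k l h
        have : (1:ℝ)/(l+1) ≤ 1/(k+1) := by
          apply one_div_le_one_div_of_le
          · positivity
          · exact_mod_cast Nat.succ_le_succ h
        linarith
      exact ⟨max m n,
        Set.image_mono (fun y hy => ⟨hy.1, hy.2.trans (hmax m _ (le_max_left m n))⟩),
        Set.image_mono (fun y hy => ⟨hy.1, hy.2.trans (hmax n _ (le_max_right m n))⟩)⟩
    obtain ⟨φ, hφ⟩ := IsCompact.nonempty_iInter_of_directed_nonempty_isCompact_isClosed
      _ hDdir hDne hDcomp (fun n => isClosed_weak_image_of_convex (hDconv n) (hDcl n))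
    set ystar := (toWeakSpace ℝ E).symm φ with hystar
    have hymem : ∀ n, ystar ∈ D n := by
      intro n
      obtain ⟨y, hy, hyφ⟩ := Set.mem_iInter.mp hφ n
      have : y = ystar := by rw [hystar, ← hyφ, LinearEquiv.symm_apply_apply]
      rwa [← this]
    have hyM : ystar ∈ M := (hymem 0).1
    have hyr : rr ystar ≤ r₀ := by
      refine real_le_of_forall_pos_le_add (fun ε hε => ?_)
      obtain ⟨n, hn⟩ := exists_nat_one_div_lt hε
      exact le_trans (hymem n).2 (by linarith [hn])
    -- the minimizing set C
    set C : Set E := {y ∈ M | rr y ≤ r₀} with hCdef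
    have hC𝒞 : C ∈ 𝒞 := by
      refine ⟨⟨ystar, hyM, hyr⟩, (fun y hy => hMK hy.1), ?_, ?_, ?_⟩
      · intro y hy z hz a b ha hb hab
        refine ⟨hMconv hy.1 hz.1 ha hb hab, ?_⟩
        calc rr (a • y + b • z) ≤ a * rr y + b * rr z := hr_conv a b y z ha hb hab
          _ ≤ a * r₀ + b * r₀ := by gcongr; exacts [hy.2, hz.2]
          _ = r₀ := by linear_combination r₀ * hab
      · refine IsCompact.of_isClosed_subset hMcomp ?_ (Set.image_mono (fun y hy => hy.1))
        refine isClosed_weak_image_of_convex ?_ (hMcl.inter (isClosed_le hr_cont continuous_const))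
        intro y hy z hz a b ha hb hab
        refine ⟨hMconv hy.1 hz.1 ha hb hab, ?_⟩
        calc rr (a • y + b • z) ≤ a * rr y + b * rr z := hr_conv a b y z ha hb hab
          _ ≤ a * r₀ + b * r₀ := by gcongr; exacts [hy.2, hz.2]
          _ = r₀ := by linear_combination r₀ * hab
      · intro s y hy
        exact ⟨hMinv s y hy.1, le_trans (hr_key s y (hMK hy.1)) hy.2⟩
    have hCM : C = M := hMmin C hC𝒞 (fun y hy => hy.1)
    intro y hy
    have : y ∈ C := hCM ▸ hy
    exact le_antisymm this.2 (hr₀le y hy)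
  -- dichotomy on r₀
  rcases eq_or_lt_of_le hr₀nonneg with h0 | hr₀pos
  · -- r₀ = 0 : M is a singleton, x₀ is a common fixed point
    have huniq : ∀ y ∈ M, ∀ z ∈ M, y = z := by
      intro y hy z hz
      have hnorm : ∀ ε : ℝ, 0 < ε → ‖y - z‖ ≤ ε := by
        intro ε hε
        obtain ⟨w, hw⟩ := hr_ev_fin 2 ![y, z] ![ε/2, ε/2] (by
          intro i
          fin_cases i <;> simp [hrconst y hy, hrconst z hz, ← h0] <;> linarith)
        have h1 : ‖Φ w - y‖ ≤ ε/2 := by simpa using hw w (mem_idealSet_self w) 0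
        have h2 : ‖Φ w - z‖ ≤ ε/2 := by simpa using hw w (mem_idealSet_self w) 1
        calc ‖y - z‖ ≤ ‖Φ w - y‖ + ‖Φ w - z‖ := by
              have := norm_sub_le_norm_sub_add_norm_sub y (Φ w) z
              have h3 : ‖y - Φ w‖ = ‖Φ w - y‖ := norm_sub_rev _ _
              linarith
          _ ≤ ε := by linarith
      have hle0 : ‖y - z‖ ≤ 0 := real_le_of_forall_pos_le_add (fun ε hε => by
        simpa using hnorm ε hε)
      have h4 : ‖y - z‖ = 0 := le_antisymm hle0 (norm_nonneg _)
      exact sub_eq_zero.mp (norm_eq_zero.mp h4)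
    exact ⟨x₀, hx₀K, fun s => huniq (act s x₀) (hΦM s) x₀ hx₀M⟩

  · -- r₀ > 0 : derive a contradiction using near uniform convexity
    exfalso
    obtain ⟨δ₀, hδ₀pos, hδ₀⟩ := hNUC (1/2) (by norm_num)
    set δ : ℝ := min δ₀ (1/2) with hδdef
    have hδpos : 0 < δ := lt_min hδ₀pos (by norm_num)
    have hδle : δ ≤ 1/2 := min_le_right _ _
    have hδNUC : ∀ x : ℕ → E, (∀ n, x n ∈ Metric.closedBall (0 : E) 1) →
        (1/2 : ℝ) < sInf {d : ℝ | ∃ n m : ℕ, n ≠ m ∧ d = ‖x n - x m‖} →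
        Metric.infDist (0 : E) (convexHull ℝ (Set.range x)) < 1 - δ := by
      intro x h1 h2
      have h3 := hδ₀ x h1 h2
      have hmin : δ ≤ δ₀ := min_le_left _ _
      linarith
    set κ : ℝ := δ * r₀ / 100 with hκdef
    have hκpos : 0 < κ := by
      rw [hκdef]
      exact div_pos (mul_pos hδpos hr₀pos) (by norm_num)
    have hκle : κ ≤ r₀ / 4 := by
      rw [hκdef]; nlinarith
    -- the one-step construction lemma
    have hSTEP : ∀ (n : ℕ) (f : Fin n → S), ∃ σ : S,
        (∀ i, ‖Φ σ - Φ (f i)‖ ≤ r₀ + κ) ∧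
        (∀ w ∈ convexHull ℝ (Set.range fun i => Φ (f i)), r₀ - κ ≤ ‖Φ σ - w‖) := by
      intro n f
      rcases Nat.eq_zero_or_pos n with rfl | hn
      · refine ⟨Classical.arbitrary S, fun i => i.elim0, fun w hw => ?_⟩
        rw [Set.range_eq_empty, convexHull_empty] at hw
        exact absurd hw (Set.notMem_empty w)
      set Hl := convexHull ℝ (Set.range fun i => Φ (f i)) with hHldef
      have hHlM : Hl ⊆ M := convexHull_min (by rintro - ⟨i, rfl⟩; exact hΦM _) hMconv
      have hHlcomp : IsCompact Hl := (Set.finite_range _).isCompact_convexHull ℝ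
      have hHlne : Hl.Nonempty :=
        ⟨Φ (f ⟨0, hn⟩), subset_convexHull _ _ ⟨⟨0, hn⟩, rfl⟩⟩
      obtain ⟨T, hTsub, hTfin, hTcov⟩ := hHlcomp.elim_finite_subcover_image
        (b := Hl) (c := fun y => Metric.ball y (κ/4))
        (fun y _ => Metric.isOpen_ball)
        (fun y hy => Set.mem_iUnion₂.mpr ⟨y, hy, Metric.mem_ball_self (by positivity)⟩)
      obtain ⟨Tf, hTfmem⟩ : ∃ Tf : Finset E, ∀ x, x ∈ Tf ↔ x ∈ T :=
        ⟨hTfin.toFinset, fun x => hTfin.mem_toFinset⟩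
      have hTne : Tf.Nonempty := by
        obtain ⟨y, hy⟩ := hHlne
        obtain ⟨t, ht, -⟩ := Set.mem_iUnion₂.mp (hTcov hy)
        exact ⟨t, (hTfmem t).mpr ht⟩
      obtain ⟨N, hNdef⟩ : ∃ N : ℝ, N = (Tf.card : ℝ) := ⟨_, rfl⟩
      have hN1 : (1:ℝ) ≤ N := by
        rw [hNdef]; exact_mod_cast Finset.card_pos.mpr hTne
      have hNpos : (0:ℝ) < N := by linarith
      obtain ⟨η, hηdef⟩ : ∃ η : ℝ, η = κ / (4 * N) := ⟨_, rfl⟩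
      have hηpos : 0 < η := by rw [hηdef]; exact div_pos hκpos (by linarith)
      have hηκ : η ≤ κ := by
        rw [hηdef, div_le_iff₀ (by positivity)]
        nlinarith
      -- the centroid of the net
      obtain ⟨c, hcdef⟩ : ∃ c : E, c = ∑ x ∈ Tf, (N⁻¹ : ℝ) • x := ⟨_, rfl⟩
      have hNinv_nonneg : (0:ℝ) ≤ N⁻¹ := inv_nonneg.mpr (le_of_lt hNpos)
      have hcHl : c ∈ Hl := by
        rw [hcdef]
        refine (convex_convexHull ℝ _).sum_mem (fun x _ => hNinv_nonneg) ?_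
          (fun x hx => hTsub ((hTfmem x).mp hx))
        rw [Finset.sum_const, nsmul_eq_mul, ← hNdef]
        exact mul_inv_cancel₀ (ne_of_gt hNpos)
      have hcM : c ∈ M := hHlM hcHl
      -- a common deep ideal with tight upper bounds
      obtain ⟨wst, hwst⟩ := hr_ev_fin n (fun i => Φ (f i)) (fun _ => r₀ + η) (by
        intro i
        show rr (Φ (f i)) < r₀ + η
        rw [hrconst _ (hΦM (f i))]
        linarith)
      -- a point far from the centroid
      obtain ⟨σ, hσI, hσc⟩ := hr_freq c (r₀ - η) (by
        rw [hrconst c (hHlM hcHl)]; linarith) wst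
      -- upper bounds on the whole hull
      have hup : ∀ x ∈ Hl, ‖Φ σ - x‖ ≤ r₀ + η := by
        have hball : Hl ⊆ Metric.closedBall (Φ σ) (r₀ + η) := by
          apply convexHull_min ?_ (convex_closedBall _ _)
          rintro - ⟨i, rfl⟩
          rw [Metric.mem_closedBall, dist_eq_norm, norm_sub_rev]
          exact hwst σ hσI i
        intro x hx
        have h5 := hball hx
        rw [Metric.mem_closedBall, dist_eq_norm, norm_sub_rev] at h5
        exact h5
      -- averaging : every net point is far from Φ σ
      have hsum_lb : N * (r₀ - η) ≤ ∑ x ∈ Tf, ‖Φ σ - x‖ := by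
        have hc_expand : Φ σ - c = ∑ x ∈ Tf, (N⁻¹ : ℝ) • (Φ σ - x) := by
          simp only [smul_sub]
          rw [Finset.sum_sub_distrib, ← Finset.sum_smul, Finset.sum_const, nsmul_eq_mul,
            ← hNdef, mul_inv_cancel₀ (ne_of_gt hNpos), one_smul, ← hcdef]
        have hnorm_le : ‖Φ σ - c‖ ≤ N⁻¹ * ∑ x ∈ Tf, ‖Φ σ - x‖ := by
          rw [hc_expand]
          calc ‖∑ x ∈ Tf, (N⁻¹ : ℝ) • (Φ σ - x)‖ ≤ ∑ x ∈ Tf, ‖(N⁻¹ : ℝ) • (Φ σ - x)‖ :=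
                norm_sum_le _ _
            _ = ∑ x ∈ Tf, N⁻¹ * ‖Φ σ - x‖ := by
                refine Finset.sum_congr rfl (fun x _ => ?_)
                rw [norm_smul, Real.norm_eq_abs, abs_of_nonneg (by positivity)]
            _ = N⁻¹ * ∑ x ∈ Tf, ‖Φ σ - x‖ := by rw [Finset.mul_sum]
        have h6 : r₀ - η < N⁻¹ * ∑ x ∈ Tf, ‖Φ σ - x‖ := lt_of_lt_of_le hσc hnorm_le
        have h7 : N * (r₀ - η) < N * (N⁻¹ * ∑ x ∈ Tf, ‖Φ σ - x‖) := by
          exact mul_lt_mul_of_pos_left h6 hNpos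
        rw [← mul_assoc, mul_inv_cancel₀ (ne_of_gt hNpos), one_mul] at h7
        linarith
      have hTlow : ∀ t₀ ∈ Tf, r₀ - κ/2 ≤ ‖Φ σ - t₀‖ := by
        intro t₀ ht₀
        have hsplit : ‖Φ σ - t₀‖ + ∑ x ∈ Tf.erase t₀, ‖Φ σ - x‖ = ∑ x ∈ Tf, ‖Φ σ - x‖ :=
          Finset.add_sum_erase Tf (fun x => ‖Φ σ - x‖) ht₀
        have herase : ∑ x ∈ Tf.erase t₀, ‖Φ σ - x‖ ≤ (N - 1) * (r₀ + η) := by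
          have hcard1 : 1 ≤ Tf.card := Finset.card_pos.mpr hTne
          calc ∑ x ∈ Tf.erase t₀, ‖Φ σ - x‖ ≤ ∑ _x ∈ Tf.erase t₀, (r₀ + η) := by
                refine Finset.sum_le_sum (fun x hx => ?_)
                exact hup x (hTsub ((hTfmem x).mp (Finset.mem_of_mem_erase hx)))
            _ = ((Tf.erase t₀).card : ℝ) * (r₀ + η) := by
                rw [Finset.sum_const, nsmul_eq_mul]
            _ = (N - 1) * (r₀ + η) := by
                rw [Finset.card_erase_of_mem ht₀, hNdef]
                rw [Nat.cast_sub hcard1]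
                norm_num
        have hupperT : ∑ x ∈ Tf, ‖Φ σ - x‖ ≤ ‖Φ σ - t₀‖ + (N - 1) * (r₀ + η) := by
          linarith
        have hη2 : 2 * N * η = κ / 2 := by
          rw [hηdef]
          field_simp
          ring
        nlinarith
      refine ⟨σ, fun i => le_trans (hwst σ hσI i) (by linarith), ?_⟩
      intro w hwHl
      obtain ⟨t₀, ht₀T, ht₀ball⟩ := Set.mem_iUnion₂.mp (hTcov hwHl)
      have hd : ‖t₀ - w‖ < κ/4 := by
        rw [Metric.mem_ball, dist_eq_norm] at ht₀ball
        rw [norm_sub_rev]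
        exact ht₀ball
      have h8 := hTlow t₀ ((hTfmem t₀).mpr ht₀T)
      have htri : ‖Φ σ - t₀‖ ≤ ‖Φ σ - w‖ + ‖w - t₀‖ := norm_sub_le_norm_sub_add_norm_sub _ _ _
      rw [norm_sub_rev w t₀] at htri
      linarith
    -- construct the sequence
    obtain ⟨sq, hsq_pair, hsq_goeb⟩ : ∃ sq : ℕ → S,
        (∀ i n : ℕ, i < n → ‖Φ (sq n) - Φ (sq i)‖ ≤ r₀ + κ) ∧
        (∀ n : ℕ, ∀ w ∈ convexHull ℝ ((fun i => Φ (sq i)) '' Set.Iio n),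
          r₀ - κ ≤ ‖Φ (sq n) - w‖) := by
      choose pick hp1 hp2 using hSTEP
      set ch : (n : ℕ) → Fin n → S := fun n => Nat.rec (fun i => i.elim0)
        (fun k f => Fin.snoc f (pick k f)) n with hch
      have hsucc : ∀ k, ch (k+1) = Fin.snoc (ch k) (pick k (ch k)) := by
        intro k; rw [hch]
      set sq : ℕ → S := fun n => ch (n+1) (Fin.last n) with hsqdef
      have hsqeq : ∀ n, sq n = pick n (ch n) := by
        intro n
        rw [hsqdef]
        show ch (n+1) (Fin.last n) = pick n (ch n)
        rw [hsucc n]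
        exact Fin.snoc_last _ _
      have heval : ∀ n (i : Fin n), ch n i = sq (i : ℕ) := by
        intro n
        induction n with
        | zero => exact fun i => i.elim0
        | succ k ih =>
          intro i
          refine Fin.lastCases ?_ ?_ i
          · rw [hsucc k, Fin.snoc_last, ← hsqeq k, Fin.val_last]
          · intro j
            rw [hsucc k, Fin.snoc_castSucc, ih j]
            congr 1
      have himg : ∀ n : ℕ, (fun i => Φ (sq i)) '' Set.Iio n =
          Set.range (fun i : Fin n => Φ (ch n i)) := by
        intro n
        ext y
        constructor
        · rintro ⟨i, hi, rfl⟩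
          exact ⟨⟨i, hi⟩, congrArg Φ (heval n ⟨i, hi⟩)⟩
        · rintro ⟨i, rfl⟩
          exact ⟨(i : ℕ), i.2, congrArg Φ (heval n i).symm⟩
      refine ⟨sq, ?_, ?_⟩
      · intro i n hin
        have h1 := hp1 n (ch n) ⟨i, hin⟩
        rw [heval n ⟨i, hin⟩] at h1
        rw [hsqeq n]
        exact h1
      · intro n w hw
        rw [himg n] at hw
        have h2 := hp2 n (ch n) w hw
        rw [hsqeq n]
        exact h2
    -- the sequence of points
    set z : ℕ → E := fun n => Φ (sq n) with hzdef
    have hzM : ∀ n, z n ∈ M := fun n => hΦM _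
    have hz_pair : ∀ i n : ℕ, i < n → ‖z n - z i‖ ≤ r₀ + κ := fun i n h => hsq_pair i n h
    have hz_goeb : ∀ n : ℕ, ∀ w ∈ convexHull ℝ (z '' Set.Iio n), r₀ - κ ≤ ‖z n - w‖ :=
      fun n w hw => hsq_goeb n w hw
    -- a weak cluster point of the sequence
    have hmapψ : map (fun n => toWeakSpace ℝ E (z n)) atTop ≤ 𝓟 (toWeakSpace ℝ E '' M) := by
      refine le_principal_iff.mpr ?_
      refine mem_map.mpr ?_
      filter_upwards with n
      exact ⟨z n, hzM n, rfl⟩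
    obtain ⟨q, hqmem, hq⟩ := hMcomp.exists_clusterPt hmapψ
    set p : E := (toWeakSpace ℝ E).symm q with hpdef
    have hpM : p ∈ M := by
      obtain ⟨y, hyM, hyq⟩ := hqmem
      have : y = p := by rw [hpdef, ← hyq, LinearEquiv.symm_apply_apply]
      rwa [← this]
    have hfreq : ∀ U : Set (WeakSpace ℝ E), IsOpen U → q ∈ U →
        ∀ N : ℕ, ∃ n, N ≤ n ∧ toWeakSpace ℝ E (z n) ∈ U := by
      intro U hU hqU N
      have h1 : U ∈ nhds q := hU.mem_nhds hqU
      have h2 : (fun n => toWeakSpace ℝ E (z n)) '' Set.Ici N ∈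
          map (fun n => toWeakSpace ℝ E (z n)) atTop :=
        image_mem_map (mem_atTop N)
      have h3 := clusterPt_iff_nonempty.mp hq h1 h2
      obtain ⟨-, hU', n, hn, rfl⟩ := h3
      exact ⟨n, hn, hU'⟩
    have hfreq_f : ∀ (f : StrongDual ℝ E) (ε : ℝ), 0 < ε →
        ∀ N : ℕ, ∃ n, N ≤ n ∧ |f (z n) - f p| < ε := by
      intro f ε hε N
      set U : Set (WeakSpace ℝ E) :=
        (fun φ : WeakSpace ℝ E => f ((toWeakSpace ℝ E).symm φ)) ⁻¹' (Metric.ball (f p) ε) with hUdef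
      have hUopen : IsOpen U := (weakSpace_eval_continuous f).isOpen_preimage _ Metric.isOpen_ball
      have hqU : q ∈ U := by
        rw [hUdef]
        show f ((toWeakSpace ℝ E).symm q) ∈ Metric.ball (f p) ε
        rw [← hpdef]
        exact Metric.mem_ball_self hε
      obtain ⟨n, hn, hnU⟩ := hfreq U hUopen hqU N
      refine ⟨n, hn, ?_⟩
      have : f ((toWeakSpace ℝ E).symm (toWeakSpace ℝ E (z n))) ∈ Metric.ball (f p) ε := hnU
      rw [LinearEquiv.symm_apply_apply] at this
      rw [← Real.dist_eq]
      exact this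
    -- Mazur : p lies in the closed convex hull of the sequence
    have hmaz : p ∈ closure (convexHull ℝ (Set.range z)) := by
      set A := convexHull ℝ (Set.range z) with hAdef
      have hAconv : Convex ℝ (closure A) := (convex_convexHull ℝ _).closure
      have hclw : IsClosed (toWeakSpace ℝ E '' closure A) :=
        isClosed_weak_image_of_convex hAconv isClosed_closure
      have hsub : Set.range (fun n => toWeakSpace ℝ E (z n)) ⊆ toWeakSpace ℝ E '' closure A := by
        rintro - ⟨n, rfl⟩
        exact ⟨z n, subset_closure (subset_convexHull _ _ ⟨n, rfl⟩), rfl⟩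
      have hqcl : q ∈ closure (Set.range (fun n => toWeakSpace ℝ E (z n))) := by
        rw [mem_closure_iff]
        intro O hO hqO
        obtain ⟨n, -, hn⟩ := hfreq O hO hqO 0
        exact ⟨toWeakSpace ℝ E (z n), hn, ⟨n, rfl⟩⟩
      have hq' : q ∈ toWeakSpace ℝ E '' closure A :=
        closure_minimal hsub hclw hqcl
      obtain ⟨y, hy, hyq⟩ := hq'
      have : y = p := by rw [hpdef, ← hyq, LinearEquiv.symm_apply_apply]
      rwa [← this]
    -- upper bound : p is uniformly closer to all z m
    have hT1 : ∀ m : ℕ, ‖p - z m‖ ≤ (1 - δ) * (r₀ + κ) + κ := by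
      intro m
      by_cases hpz : p = z m
      · rw [hpz, sub_self, norm_zero]
        nlinarith
      obtain ⟨f, hf1, hf2⟩ := exists_dual_vector ℝ (p - z m) (norm_ne_zero_iff.mpr (sub_ne_zero.mpr hpz))
      have hnext : ∀ N : ℕ, ∃ n, N ≤ n ∧ |f (z n) - f p| < κ := fun N => hfreq_f f κ hκpos N
      choose nf hnf1 hnf2 using hnext
      set φ : ℕ → ℕ := fun k => Nat.rec (nf (m+1)) (fun _ prev => nf (prev + 1)) k with hφdef
      have hφ0 : m + 1 ≤ φ 0 := hnf1 (m+1)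
      have hφsucc : ∀ k, φ k + 1 ≤ φ (k+1) := fun k => hnf1 (φ k + 1)
      have hφm : ∀ k, m < φ k := by
        intro k
        induction k with
        | zero => omega
        | succ k ih => have := hφsucc k; omega
      have hφmono : StrictMono φ := strictMono_nat_of_lt_succ (fun k => by
        have := hφsucc k; omega)
      have hφf : ∀ k, |f (z (φ k)) - f p| < κ := by
        intro k
        cases k with
        | zero => exact hnf2 (m+1)
        | succ k => exact hnf2 (φ k + 1)
      set x : ℕ → E := fun k => (r₀ + κ)⁻¹ • (z (φ k) - z m) with hxdef
      have hrκpos : (0:ℝ) < r₀ + κ := by linarith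
      have hxball : ∀ k, x k ∈ Metric.closedBall (0:E) 1 := by
        intro k
        rw [Metric.mem_closedBall, dist_zero_right, hxdef]
        show ‖(r₀ + κ)⁻¹ • (z (φ k) - z m)‖ ≤ 1
        rw [norm_smul, Real.norm_eq_abs, abs_of_nonneg (by positivity)]
        rw [inv_mul_le_iff₀ hrκpos, mul_one]
        exact hz_pair m (φ k) (hφm k)
      have hsep_lb : ∀ a b : ℕ, a ≠ b → (3/5 : ℝ) ≤ ‖x a - x b‖ := by
        have key : ∀ a b : ℕ, b < a → (3/5 : ℝ) ≤ ‖x a - x b‖ := by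
          intro a b hba
          have hlt : φ b < φ a := hφmono hba
          have hzz : r₀ - κ ≤ ‖z (φ a) - z (φ b)‖ := by
            refine hz_goeb (φ a) (z (φ b)) ?_
            exact subset_convexHull _ _ ⟨φ b, hlt, rfl⟩
          have hx_eq : x a - x b = (r₀ + κ)⁻¹ • (z (φ a) - z (φ b)) := by
            rw [hxdef]
            show (r₀ + κ)⁻¹ • (z (φ a) - z m) - (r₀ + κ)⁻¹ • (z (φ b) - z m) = _
            rw [← smul_sub]
            congr 1
            abel
          rw [hx_eq, norm_smul, Real.norm_eq_abs, abs_of_nonneg (by positivity)]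
          rw [le_inv_mul_iff₀ hrκpos]
          nlinarith
        intro a b hab
        rcases lt_or_gt_of_ne hab with h | h
        · rw [norm_sub_rev]; exact key b a h
        · exact key a b h
      have hsep : (1/2 : ℝ) < sInf {d : ℝ | ∃ a b : ℕ, a ≠ b ∧ d = ‖x a - x b‖} := by
        have hne : {d : ℝ | ∃ a b : ℕ, a ≠ b ∧ d = ‖x a - x b‖}.Nonempty :=
          ⟨‖x 0 - x 1‖, 0, 1, by norm_num, rfl⟩
        have hlb : ∀ d ∈ {d : ℝ | ∃ a b : ℕ, a ≠ b ∧ d = ‖x a - x b‖}, (3/5:ℝ) ≤ d := by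
          rintro - ⟨a, b, hab, rfl⟩
          exact hsep_lb a b hab
        have := le_csInf hne hlb
        linarith
      have hinf := hδNUC x hxball hsep
      have hhullne : (convexHull ℝ (Set.range x)).Nonempty :=
        ⟨x 0, subset_convexHull _ _ ⟨0, rfl⟩⟩
      rw [Metric.infDist_lt_iff hhullne] at hinf
      obtain ⟨V, hVhull, hVdist⟩ := hinf
      have hVnorm : ‖V‖ < 1 - δ := by
        rw [dist_comm, dist_zero_right] at hVdist
        exact hVdist
      -- functional estimate on the hull
      have hfV : (r₀ + κ)⁻¹ * ((f p - κ) - f (z m)) ≤ f V := by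
        have hsubhull : convexHull ℝ (Set.range x) ⊆
            {v : E | (r₀ + κ)⁻¹ * ((f p - κ) - f (z m)) ≤ f v} := by
          apply convexHull_min
          · rintro - ⟨k, rfl⟩
            show (r₀ + κ)⁻¹ * ((f p - κ) - f (z m)) ≤ f (x k)
            have hfx : f (x k) = (r₀ + κ)⁻¹ * (f (z (φ k)) - f (z m)) := by
              rw [hxdef]
              show f ((r₀ + κ)⁻¹ • (z (φ k) - z m)) = _
              rw [map_smul, map_sub]
              simp [smul_eq_mul]
            rw [hfx]
            have h9 : f p - κ ≤ f (z (φ k)) := by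
              have := hφf k
              have := abs_lt.mp this
              linarith [this.1]
            have h10 : (0:ℝ) ≤ (r₀ + κ)⁻¹ := by positivity
            exact mul_le_mul_of_nonneg_left (by linarith) h10
          · exact convex_halfSpace_ge (IsLinearMap.mk f.map_add f.map_smul) _
        exact hsubhull hVhull
      have hfVle : f V ≤ 1 - δ := by
        calc f V ≤ |f V| := le_abs_self _
          _ = ‖f V‖ := rfl
          _ ≤ ‖f‖ * ‖V‖ := f.le_opNorm V
          _ = ‖V‖ := by rw [hf1, one_mul]
          _ ≤ 1 - δ := hVnorm.le
      have hfp : f (p - z m) = ‖p - z m‖ := hf2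
      rw [map_sub] at hfp
      have h11 : f p - f (z m) - κ ≤ (r₀ + κ) * f V := by
        have h12 := mul_le_mul_of_nonneg_left hfV (le_of_lt hrκpos)
        rw [← mul_assoc, mul_inv_cancel₀ (ne_of_gt hrκpos), one_mul] at h12
        linarith
      have h13 : (r₀ + κ) * f V ≤ (r₀ + κ) * (1 - δ) :=
        mul_le_mul_of_nonneg_left hfVle (le_of_lt hrκpos)
      calc ‖p - z m‖ = f p - f (z m) := hfp.symm
        _ ≤ (r₀ + κ) * (1 - δ) + κ := by linarith
        _ = (1 - δ) * (r₀ + κ) + κ := by ring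
    -- lower bound : some z m is far from p
    have hlow : ∃ m : ℕ, r₀ - 2*κ ≤ ‖p - z m‖ := by
      obtain ⟨W, hWhull, hWp⟩ : ∃ W ∈ convexHull ℝ (Set.range z), ‖p - W‖ < κ := by
        have h14 := hmaz
        rw [Metric.mem_closure_iff] at h14
        obtain ⟨W, hW, hdist⟩ := h14 κ hκpos
        rw [dist_eq_norm] at hdist
        exact ⟨W, hW, hdist⟩
      rw [convexHull_eq_union_convexHull_finite_subsets] at hWhull
      simp only [Set.mem_iUnion] at hWhull
      obtain ⟨t, ht, hWt⟩ := hWhull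
      have hidx : ∃ m : ℕ, ∀ y ∈ t, ∃ i, i < m ∧ z i = y := by
        have hch : ∀ y : {x // x ∈ t}, ∃ i : ℕ, z i = y := fun y => ht y.2
        choose g hg using hch
        refine ⟨(t.attach.sup g) + 1, fun y hy => ⟨g ⟨y, hy⟩, ?_, hg ⟨y, hy⟩⟩⟩
        have := Finset.le_sup (f := g) (Finset.mem_attach t ⟨y, hy⟩)
        omega
      obtain ⟨m, hm⟩ := hidx
      have hWm : W ∈ convexHull ℝ (z '' Set.Iio m) := by
        refine convexHull_mono ?_ hWt
        intro y hy
        obtain ⟨i, hi, hzi⟩ := hm y hy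
        exact ⟨i, hi, hzi⟩
      have h15 := hz_goeb m W hWm
      refine ⟨m, ?_⟩
      have htri : ‖z m - W‖ ≤ ‖z m - p‖ + ‖p - W‖ := norm_sub_le_norm_sub_add_norm_sub _ _ _
      rw [norm_sub_rev (z m) p] at htri
      linarith
    obtain ⟨m, hm⟩ := hlow
    have h16 := hT1 m
    rw [hκdef] at hm h16
    nlinarith
end

section
/- Let K be a weakly compact, convex, non-empty subset of a Banach space E and let (x_α) be a bounded net in E indexed by a directed set. Then the asymptotic center AC(K, (x_α)) = { k ∈ K : limsup_α ‖x_α − k‖ = r(K, (x_α)) } is non-empty, where r(K, (x_α)) = inf{ limsup_α ‖x_α − k‖ : k ∈ K }. -/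
open Filter

/-- The asymptotic radius `r(K, (x_α))` of a net `x : ι → E` (along a filter `F` on the
index set) relative to `K`. -/
noncomputable def asympRadius {E ι : Type*} [NormedAddCommGroup E]
    (F : Filter ι) (K : Set E) (x : ι → E) : ℝ :=
  sInf ((fun k => Filter.limsup (fun α => ‖x α - k‖) F) '' K)

/-- The asymptotic center `AC(K, (x_α))` of a net `x : ι → E` relative to `K`. -/
noncomputable def asympCenter {E ι : Type*} [NormedAddCommGroup E]
    (F : Filter ι) (K : Set E) (x : ι → E) : Set E :=
  {k | k ∈ K ∧ Filter.limsup (fun α => ‖x α - k‖) F = asympRadius F K x}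

/-- Let `K` be a weakly compact convex non-empty subset of a Banach space `E`, and let
`(x_α)` be a bounded net in `E` indexed by a directed set.  Then the asymptotic center
`AC(K, (x_α))` is non-empty. -/
theorem asympCenter_nonempty_of_weaklyCompact
    {E : Type*} [NormedAddCommGroup E] [NormedSpace ℝ E] [CompleteSpace E]
    {K : Set E} (hKw : IsCompact (toWeakSpace ℝ E '' K))
    (hKconv : Convex ℝ K) (hKne : K.Nonempty)
    {ι : Type*} [Preorder ι] [Nonempty ι] [IsDirected ι (· ≤ ·)]
    (x : ι → E) (hx : Bornology.IsBounded (Set.range x)) :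
    (asympCenter (atTop : Filter ι) K x).Nonempty := by
  haveI : (atTop : Filter ι).NeBot := atTop_neBot_iff.2 ⟨‹_›, ‹_›⟩
  obtain ⟨C, hC⟩ := isBounded_iff_forall_norm_le.1 hx
  have hC' : ∀ α, ‖x α‖ ≤ C := fun α => hC _ (Set.mem_range_self α)
  set φ : E → ℝ := fun k => Filter.limsup (fun α => ‖x α - k‖) atTop with hφ
  -- basic boundedness facts
  have bddA : ∀ k : E, IsBoundedUnder (· ≤ ·) (atTop : Filter ι) (fun α => ‖x α - k‖) :=
    fun k => isBoundedUnder_of ⟨C + ‖k‖, fun α =>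
      (norm_sub_le _ _).trans (add_le_add_left (hC' α) _)⟩
  have bddB : ∀ k : E, IsBoundedUnder (· ≥ ·) (atTop : Filter ι) (fun α => ‖x α - k‖) :=
    fun k => isBoundedUnder_of ⟨0, fun α => norm_nonneg _⟩
  have cobdd : ∀ k : E, IsCoboundedUnder (· ≤ ·) (atTop : Filter ι) (fun α => ‖x α - k‖) :=
    fun k => (bddB k).isCoboundedUnder_le
  have hφ0 : ∀ k, 0 ≤ φ k := fun k =>
    le_limsup_of_frequently_le (Frequently.of_forall fun α => norm_nonneg _) (bddA k)
  -- Lipschitz property of φ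
  have hLip : ∀ k k' : E, φ k ≤ φ k' + ‖k - k'‖ := by
    intro k k'
    have h1 : φ k ≤ Filter.limsup (fun α => ‖x α - k'‖ + ‖k - k'‖) atTop := by
      refine limsup_le_limsup (Eventually.of_forall fun α => ?_) (cobdd k)
        (isBoundedUnder_of ⟨C + ‖k'‖ + ‖k - k'‖, fun α =>
          add_le_add_left ((norm_sub_le _ _).trans (add_le_add_left (hC' α) _)) _⟩)
      calc ‖x α - k‖ = ‖(x α - k') + (k' - k)‖ := by rw [sub_add_sub_cancel]
        _ ≤ ‖x α - k'‖ + ‖k' - k‖ := norm_add_le _ _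
        _ = ‖x α - k'‖ + ‖k - k'‖ := by rw [norm_sub_rev k' k]
    rwa [limsup_add_const _ _ _ (bddA k') (cobdd k')] at h1
  have hφcont : Continuous φ := by
    have : LipschitzWith 1 φ := by
      rw [lipschitzWith_iff_dist_le_mul]
      intro k k'
      rw [Real.dist_eq, dist_eq_norm, NNReal.coe_one, one_mul]
      rw [abs_sub_le_iff]
      constructor
      · have := hLip k k'; linarith
      · have := hLip k' k; rw [norm_sub_rev] at this; linarith
    exact this.continuous
  -- K is norm-closed
  have hKsub : K = toWeakSpaceCLM ℝ E ⁻¹' (toWeakSpace ℝ E '' K) := by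
    ext k
    constructor
    · intro hk; exact ⟨k, hk, rfl⟩
    · rintro ⟨k', hk', hkk'⟩
      rw [toWeakSpaceCLM_eq_toWeakSpace] at hkk'
      rwa [(toWeakSpace ℝ E).injective hkk'] at hk'
  haveI : T2Space (WeakSpace ℝ E) := by
    refine (WeakBilin.isEmbedding (B := (topDualPairing ℝ E).flip) ?_).t2Space
    intro a b hab
    by_contra hne
    obtain ⟨f, hf⟩ := SeparatingDual.exists_ne_zero (R := ℝ) (sub_ne_zero.2 hne)
    have : (topDualPairing ℝ E).flip a f = (topDualPairing ℝ E).flip b f := by rw [hab]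
    simp only [LinearMap.flip_apply, topDualPairing_apply] at this
    apply hf
    simp [map_sub, this]
  have hKclosed : IsClosed K := by
    rw [hKsub]
    exact hKw.isClosed.preimage (map_continuous _)
  -- the radius
  set r : ℝ := asympRadius (atTop : Filter ι) K x with hr
  have himne : (φ '' K).Nonempty := hKne.image φ
  have hbdd : BddBelow (φ '' K) := ⟨0, by rintro y ⟨k, -, rfl⟩; exact hφ0 k⟩
  have hrle : ∀ k ∈ K, r ≤ φ k := fun k hk => csInf_le hbdd ⟨k, hk, rfl⟩
  -- the sublevel sets
  set S : ℕ → Set E := fun n => {k ∈ K | φ k ≤ r + 1 / (n + 1)} with hS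
  have hSne : ∀ n, (S n).Nonempty := by
    intro n
    have hpos : (0 : ℝ) < 1 / (n + 1) := by positivity
    obtain ⟨y, ⟨k, hk, rfl⟩, hy⟩ := exists_lt_of_csInf_lt himne (lt_add_of_pos_right r hpos)
    exact ⟨k, hk, hy.le⟩
  have hSsub : ∀ n, S n ⊆ K := fun n k hk => hk.1
  have hSmono : ∀ n, S (n + 1) ⊆ S n := by
    intro n k hk
    refine ⟨hk.1, hk.2.trans (add_le_add_right ?_ r)⟩
    apply one_div_le_one_div_of_le (by positivity)
    push_cast; linarith
  have hSclosed : ∀ n, IsClosed (S n) := by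
    intro n
    have : S n = K ∩ φ ⁻¹' Set.Iic (r + 1 / (n + 1)) := rfl
    rw [this]
    exact hKclosed.inter (isClosed_Iic.preimage hφcont)
  -- convexity of the sublevel sets
  have hSconv : ∀ n, Convex ℝ (S n) := by
    intro n
    rintro k1 ⟨hk1K, hk1⟩ k2 ⟨hk2K, hk2⟩ a b ha hb hab
    refine ⟨hKconv hk1K hk2K ha hb hab, ?_⟩
    have key : ∀ α, ‖x α - (a • k1 + b • k2)‖ ≤ a * ‖x α - k1‖ + b * ‖x α - k2‖ := by
      intro α
      have hdec : x α - (a • k1 + b • k2) = a • (x α - k1) + b • (x α - k2) := by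
        rw [smul_sub, smul_sub, ← sub_sub]
        rw [show a • x α - a • k1 + (b • x α - b • k2)
            = (a • x α + b • x α) - a • k1 - b • k2 by abel, ← add_smul, hab, one_smul]
      rw [hdec]
      calc ‖a • (x α - k1) + b • (x α - k2)‖
          ≤ ‖a • (x α - k1)‖ + ‖b • (x α - k2)‖ := norm_add_le _ _
        _ = a * ‖x α - k1‖ + b * ‖x α - k2‖ := by
            rw [norm_smul, norm_smul, Real.norm_of_nonneg ha, Real.norm_of_nonneg hb]
    -- limsup of a nonneg constant times a sequence
    have hmul : ∀ (c : ℝ), 0 ≤ c → ∀ k : E,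
        Filter.limsup (fun α => c * ‖x α - k‖) atTop ≤ c * φ k := by
      intro c hc k
      have := limsup_mul_le (f := (atTop : Filter ι)) (u := fun _ => c)
        (v := fun α => ‖x α - k‖) (Frequently.of_forall fun _ => hc)
        (isBoundedUnder_of ⟨c, fun _ => le_refl c⟩)
        (Eventually.of_forall fun α => norm_nonneg _) (bddA k)
      rwa [limsup_const c] at this
    have hb1 : IsBoundedUnder (· ≤ ·) (atTop : Filter ι) (fun α => a * ‖x α - k1‖) :=
      isBoundedUnder_of ⟨a * (C + ‖k1‖), fun α => mul_le_mul_of_nonneg_left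
        ((norm_sub_le _ _).trans (add_le_add_left (hC' α) _)) ha⟩
    have hb2 : IsBoundedUnder (· ≤ ·) (atTop : Filter ι) (fun α => b * ‖x α - k2‖) :=
      isBoundedUnder_of ⟨b * (C + ‖k2‖), fun α => mul_le_mul_of_nonneg_left
        ((norm_sub_le _ _).trans (add_le_add_left (hC' α) _)) hb⟩
    have hcb2 : IsCoboundedUnder (· ≤ ·) (atTop : Filter ι) (fun α => b * ‖x α - k2‖) :=
      (isBoundedUnder_of ⟨0, fun α => mul_nonneg hb (norm_nonneg _)⟩ :
        IsBoundedUnder (· ≥ ·) _ _).isCoboundedUnder_le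
    have hcb1 : IsCoboundedUnder (· ≤ ·) (atTop : Filter ι) (fun α => a * ‖x α - k1‖) :=
      (isBoundedUnder_of ⟨0, fun α => mul_nonneg ha (norm_nonneg _)⟩ :
        IsBoundedUnder (· ≥ ·) _ _).isCoboundedUnder_le
    calc φ (a • k1 + b • k2)
        ≤ Filter.limsup (fun α => a * ‖x α - k1‖ + b * ‖x α - k2‖) atTop := by
          refine limsup_le_limsup (Eventually.of_forall key) (cobdd _) ?_
          exact isBoundedUnder_le_add hb1 hb2
      _ = Filter.limsup ((fun α => a * ‖x α - k1‖) + fun α => b * ‖x α - k2‖) atTop := rfl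
      _ ≤ Filter.limsup (fun α => a * ‖x α - k1‖) atTop
            + Filter.limsup (fun α => b * ‖x α - k2‖) atTop := by
          exact limsup_add_le (isBoundedUnder_of ⟨0, fun α =>
            mul_nonneg ha (norm_nonneg _)⟩) hb1 hcb2 hb2
      _ ≤ a * φ k1 + b * φ k2 := add_le_add (hmul a ha k1) (hmul b hb k2)
      _ ≤ a * (r + 1 / (n + 1)) + b * (r + 1 / (n + 1)) := by
          exact add_le_add (mul_le_mul_of_nonneg_left hk1 ha)
            (mul_le_mul_of_nonneg_left hk2 hb)
      _ = r + 1 / (n + 1) := by rw [← add_mul, hab, one_mul]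
  -- the weak images
  set W : ℕ → Set (WeakSpace ℝ E) := fun n => toWeakSpace ℝ E '' S n with hW
  have hWclosed : ∀ n, IsClosed (W n) := by
    intro n
    have h := (hSconv n).toWeakSpace_closure (𝕜 := ℝ)
    rw [(hSclosed n).closure_eq] at h
    rw [show W n = closure (W n) from h]
    exact isClosed_closure
  have hWcompact : ∀ n, IsCompact (W n) :=
    fun n => hKw.of_isClosed_subset (hWclosed n) (Set.image_mono (hSsub n))
  have hWne : ∀ n, (W n).Nonempty := fun n => (hSne n).image _
  have hWmono : ∀ n, W (n + 1) ⊆ W n := fun n => Set.image_mono (hSmono n)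
  obtain ⟨y, hy⟩ := IsCompact.nonempty_iInter_of_sequence_nonempty_isCompact_isClosed
    W hWmono hWne (hWcompact 0) hWclosed
  have hy' : ∀ n, y ∈ W n := fun n => Set.mem_iInter.1 hy n
  obtain ⟨k, hk0, rfl⟩ := hy' 0
  have hkS : ∀ n, k ∈ S n := by
    intro n
    obtain ⟨k', hk', hkk'⟩ := hy' n
    rwa [(toWeakSpace ℝ E).injective hkk'] at hk'
  have hφk : φ k ≤ r := by
    refine le_of_forall_pos_le_add fun ε hε => ?_
    obtain ⟨n, hn⟩ := exists_nat_one_div_lt hε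
    exact (hkS n).2.trans (by linarith)
  exact ⟨k, hk0.1, le_antisymm hφk (hrle k hk0.1)⟩
end

section
/- Let E be a Banach space, Λ a directed set, K a non-empty subset of E, and for each α ∈ Λ let T_α : K → K be non-expansive. Let Ẽ = l∞(E)/𝒩 with 𝒩 = { (x_α) : lim_α ‖x_α‖ = 0 }, and let K̃ = { [(k_α)] ∈ Ẽ : k_α ∈ K for each α }. Then the map T̃ : K̃ → K̃ defined by T̃[(x_α)] = [(T_α x_α)] is well-defined (independent of the choice of representative with entries in K) and non-expansive: ‖T̃[(x_α)] − T̃[(y_α)]‖ ≤ ‖[(x_α)] − [(y_α)]‖ for all [(x_α)], [(y_α)] ∈ K̃. -/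
open Filter

/-- Let `E` be a Banach space, `Λ` a directed set, `K` a non-empty subset of `E`, and for
each `α ∈ Λ` let `T_α : K → K` be non-expansive.  In `Ẽ = l∞(E)/𝒩`, where
`𝒩 = {(n_α) : lim_α ‖n_α‖ = 0}` and the quotient norm satisfies
`‖[(x_α)]‖ = limsup_α ‖x_α‖`, the mega mapping `T̃[(x_α)] = [(T_α x_α)]` on
`K̃ = {[(k_α)] : k_α ∈ K}` is:

* well defined, i.e. independent of the representative with entries in `K`:
  if `lim_α ‖x_α - y_α‖ = 0` then `lim_α ‖T_α x_α - T_α y_α‖ = 0`; and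
* non-expansive: `‖T̃[(x_α)] - T̃[(y_α)]‖ ≤ ‖[(x_α)] - [(y_α)]‖`, i.e.
  `limsup_α ‖T_α x_α - T_α y_α‖ ≤ limsup_α ‖x_α - y_α‖`. -/
theorem megaMapping_wellDefined_and_nonexpansive
    {E : Type*} [NormedAddCommGroup E] [NormedSpace ℝ E] [CompleteSpace E]
    {Λ : Type*} [Preorder Λ] [Nonempty Λ] [IsDirected Λ (· ≤ ·)]
    {K : Set E} (hKne : K.Nonempty)
    (T : Λ → E → E) (hmaps : ∀ α : Λ, ∀ k ∈ K, T α k ∈ K)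
    (hnonexp : ∀ α : Λ, ∀ k ∈ K, ∀ k' ∈ K, ‖T α k - T α k'‖ ≤ ‖k - k'‖)
    (x y : Λ → E) (hxK : ∀ α, x α ∈ K) (hyK : ∀ α, y α ∈ K)
    (hxb : Bornology.IsBounded (Set.range x)) (hyb : Bornology.IsBounded (Set.range y)) :
    (Tendsto (fun α => ‖x α - y α‖) atTop (nhds 0) →
      Tendsto (fun α => ‖T α (x α) - T α (y α)‖) atTop (nhds 0)) ∧
    limsup (fun α => ‖T α (x α) - T α (y α)‖) atTop ≤
      limsup (fun α => ‖x α - y α‖) atTop := by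
  have hpt : ∀ α, ‖T α (x α) - T α (y α)‖ ≤ ‖x α - y α‖ :=
    fun α => hnonexp α _ (hxK α) _ (hyK α)
  constructor
  · intro h
    exact squeeze_zero (fun α => norm_nonneg _) hpt h
  · obtain ⟨Cx, hCx⟩ := hxb.exists_norm_le
    obtain ⟨Cy, hCy⟩ := hyb.exists_norm_le
    have hbdd : IsBoundedUnder (· ≤ ·) atTop (fun α => ‖x α - y α‖) := by
      refine ⟨Cx + Cy, eventually_map.2 (Eventually.of_forall fun α => ?_)⟩
      calc ‖x α - y α‖ ≤ ‖x α‖ + ‖y α‖ := norm_sub_le _ _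
        _ ≤ Cx + Cy := add_le_add (hCx _ (Set.mem_range_self α)) (hCy _ (Set.mem_range_self α))
    have hcob : IsCoboundedUnder (· ≤ ·) atTop (fun α => ‖T α (x α) - T α (y α)‖) :=
      IsBoundedUnder.isCoboundedUnder_le ⟨0, eventually_map.2 (Eventually.of_forall fun α => norm_nonneg _)⟩
    exact limsup_le_limsup (Eventually.of_forall hpt) hcob hbdd
end
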